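/- Let ζ = [[0,1],[−1,1]] ∈ PSL₂(ℝ), D the diagonal subgroup modulo ±I, and T the upper-triangular subgroup modulo ±I. If g ∈ D ∪ Dξ (ξ = [[0,1],[−1,0]]) and ζ g ζ⁻¹ ∈ T, then g = id. -/

import Mathlib

/-- `SL(2,ℝ)`. -/
abbrev SL2R := Matrix.SpecialLinearGroup (Fin 2) ℝ

/-- `PSL(2,ℝ) = SL(2,ℝ)/{±I}`. -/
abbrev PSL2R := SL2R ⧸ Subgroup.center SL2R

/-- The projection `SL(2,ℝ) → PSL(2,ℝ)`. -/
def projPSL : SL2R →* PSL2R := QuotientGroup.mk' (Subgroup.center SL2R)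

/-- The image `D` of the diagonal subgroup in `PSL(2,ℝ)`. -/
def Dset : Set PSL2R :=
  {g | ∃ (α : ℝ) (hα : α ≠ 0),
    g = projPSL ⟨!![α, 0; 0, α⁻¹], by rw [Matrix.det_fin_two_of]; field_simp <;> simp⟩}

/-- The image `T` of the upper-triangular subgroup in `PSL(2,ℝ)`. -/
def Tset : Set PSL2R :=
  {g | ∃ (α β : ℝ) (hα : α ≠ 0),
    g = projPSL ⟨!![α, β; 0, α⁻¹], by rw [Matrix.det_fin_two_of]; field_simp <;> simp⟩}

/-- The class `ξ` of `[[0,1],[-1,0]]` in `PSL(2,ℝ)`. -/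
def xiP : PSL2R := projPSL ⟨!![0, 1; -1, 0], by rw [Matrix.det_fin_two_of]; norm_num⟩

/-- The class `ζ` of `[[0,1],[-1,1]]` in `PSL(2,ℝ)`. -/
def zetaP : PSL2R := projPSL ⟨!![0, 1; -1, 1], by rw [Matrix.det_fin_two_of]; norm_num⟩


def negOne : SL2R := ⟨-1, by simp [Matrix.det_neg]⟩

lemma negOne_mem : negOne ∈ Subgroup.center SL2R :=
  Matrix.SpecialLinearGroup.mem_center_iff.mpr ⟨-1, by norm_num, by
    simp only [negOne, Matrix.scalar_apply]
    rw [show (Matrix.diagonal fun _ : Fin 2 => (-1:ℝ)) = -Matrix.diagonal (fun _ => 1) from ((Matrix.diagonal_neg _).trans rfl).symm, Matrix.diagonal_one]⟩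

lemma diag_proj_eq_one (α : ℝ) (h1 : α = 1 ∨ α = -1)
    (M : SL2R) (hM : (M : Matrix (Fin 2) (Fin 2) ℝ) = !![α, 0; 0, α⁻¹]) :
    projPSL M = 1 := by
  rcases h1 with rfl | rfl
  · have : M = 1 := by
      apply Subtype.ext
      rw [hM, Matrix.SpecialLinearGroup.coe_one]
      ext i j
      fin_cases i <;> fin_cases j <;> norm_num [Matrix.one_apply]
    rw [this, map_one]
  · have : M = negOne := by
      apply Subtype.ext
      rw [hM]
      show _ = (-1 : Matrix (Fin 2) (Fin 2) ℝ)
      ext i j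
      fin_cases i <;> fin_cases j <;> norm_num [Matrix.one_apply]
    rw [this]
    exact (QuotientGroup.eq_one_iff _).mpr negOne_mem

lemma projPSL_eq_iff (A B : SL2R) :
    projPSL A = projPSL B ↔ (B : Matrix (Fin 2) (Fin 2) ℝ) = A ∨ (B : Matrix (Fin 2) (Fin 2) ℝ) = -A := by
  rw [projPSL, QuotientGroup.mk'_eq_mk']
  constructor
  · rintro ⟨z, hz, rfl⟩
    obtain ⟨r, hr2, hr⟩ := Matrix.SpecialLinearGroup.mem_center_iff.mp hz
    have hB : (↑(A * z) : Matrix (Fin 2) (Fin 2) ℝ) = (A : Matrix (Fin 2) (Fin 2) ℝ) * (Matrix.scalar (Fin 2) r) := by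
      rw [Matrix.SpecialLinearGroup.coe_mul, hr]
    rcases mul_self_eq_one_iff.mp (by simpa [sq] using hr2) with h1 | h1 <;>
      subst h1 <;> simp only [map_one, map_neg] at hB <;>
      [left; right] <;> simpa [Matrix.mul_neg] using hB
  · rintro (h | h)
    · exact ⟨1, Subgroup.one_mem _, Subtype.ext (by simpa using h.symm)⟩
    · exact ⟨negOne, negOne_mem, Subtype.ext (by
        rw [Matrix.SpecialLinearGroup.coe_mul, h]
        show (A : Matrix (Fin 2) (Fin 2) ℝ) * (-1) = -A
        simp)⟩

theorem stmt16 (g : PSL2R) (hg : g ∈ Dset ∪ (fun x => x * xiP) '' Dset)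
    (hconj : zetaP * g * zetaP⁻¹ ∈ Tset) : g = 1 := by
  obtain ⟨a, b, ha, hT⟩ := hconj
  have hT' : zetaP * g = projPSL ⟨!![a, b; 0, a⁻¹], by rw [Matrix.det_fin_two_of]; field_simp <;> simp⟩ * zetaP := by
    have := congrArg (· * zetaP) hT
    simpa [mul_assoc] using this
  rcases hg with ⟨α, hα, rfl⟩ | ⟨d, ⟨α, hα, rfl⟩, rfl⟩
  · rw [zetaP] at hT'
    replace hT' := (projPSL_eq_iff (_ * _) (_ * _)).mp hT'
    erw [Matrix.SpecialLinearGroup.coe_mul, Matrix.SpecialLinearGroup.coe_mul] at hT'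
    refine diag_proj_eq_one α ?_ _ rfl
    rcases hT' with h | h
    · have h10 := congrFun (congrFun h 1) 0
      have h11 := congrFun (congrFun h 1) 1
      simp [Matrix.SpecialLinearGroup.coe_mul, Matrix.mul_apply, Fin.sum_univ_two] at h10 h11
      subst h11
      field_simp at h10
      exact mul_self_eq_one_iff.mp (by linarith)
    · have h10 := congrFun (congrFun h 1) 0
      have h11 := congrFun (congrFun h 1) 1
      simp [Matrix.SpecialLinearGroup.coe_mul, Matrix.mul_apply, Fin.sum_univ_two] at h10 h11
      field_simp at h10 h11
      exact mul_self_eq_one_iff.mp (by linear_combination α*h11 + h10)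
  · exfalso
    dsimp only at hT'
    rw [xiP, zetaP] at hT'
    replace hT' := (projPSL_eq_iff (_ * (_ * _)) (_ * _)).mp hT'
    erw [Matrix.SpecialLinearGroup.coe_mul, Matrix.SpecialLinearGroup.coe_mul, Matrix.SpecialLinearGroup.coe_mul] at hT'
    rcases hT' with h | h <;>
    · have h10 := congrFun (congrFun h 1) 0
      have h11 := congrFun (congrFun h 1) 1
      simp [Matrix.SpecialLinearGroup.coe_mul, Matrix.mul_apply, Fin.sum_univ_two] at h10 h11
      field_simp at *
      nlinarith [sq_nonneg α, sq_nonneg a, sq_nonneg (α - a), sq_nonneg (α + a)]
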